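/- (Lanes extension lemma) Let π be a policy, π̂ a restriction of a policy ρ with domain(π̂) = domain(π), such that escape(π,s) = escape(π̂,s) for all s ∈ domain(π). Let s* ∈ front(π) with action a applicable to s*, and set π' = π ∪ {s* ↦ a}, π̂' = π̂ ∪ {s* ↦ a}. Then escape(π',s) = escape(π̂',s) for every s ∈ domain(π'). -/

import Mathlib

/-- The domain of a policy (partial function from states to actions). -/
def pdom {S A : Type*} (π : S → Option A) : Set S := {s | π s ≠ none}

/-- One π-transition step: from `s` take the action `π s` prescribes, landing in a successor. -/
def pstep {S A : Type*} (succs : S → A → Set S) (π : S → Option A) (s s' : S) : Prop :=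
  ∃ a, π s = some a ∧ s' ∈ succs s a

/-- `reachFrom succs π s` : states reachable from `s` by π-trajectories (including `s`). -/
def reachFrom {S A : Type*} (succs : S → A → Set S) (π : S → Option A) (s : S) : Set S :=
  {s' | Relation.ReflTransGen (pstep succs π) s s'}

/-- `reachAll succs π` : states reachable from some domain state of `π`. -/
def reachAll {S A : Type*} (succs : S → A → Set S) (π : S → Option A) : Set S :=
  ⋃ s ∈ pdom π, reachFrom succs π s

/-- Frontier of a policy: reachable but unmapped states. -/
def front {S A : Type*} (succs : S → A → Set S) (π : S → Option A) : Set S :=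
  reachAll succs π \ pdom π

/-- `escape succs π s` : frontier states π-reachable from `s`. -/
def escape {S A : Type*} (succs : S → A → Set S) (π : S → Option A) (s : S) : Set S :=
  reachFrom succs π s ∩ front succs π

/-- A policy is proper iff every domain state reaches a frontier state. -/
def proper {S A : Type*} (succs : S → A → Set S) (π : S → Option A) : Prop :=
  ∀ s ∈ pdom π, (escape succs π s).Nonempty

/-- `π'` is a sub-policy of `π` : restriction of `π` to a subset of its domain. -/
def subpolicy {S A : Type*} (π' π : S → Option A) : Prop :=
  ∀ s a, π' s = some a → π s = some a

/-- Goal-closed: every frontier state is a goal state. -/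
def goalClosed {S A : Type*} (succs : S → A → Set S) (Sg : Set S) (π : S → Option A) : Prop :=
  front succs π ⊆ Sg

/-- `remain(π) = (front(π) \ S*) ∪ ({s₀} \ (S* ∪ domain(π)))`. -/
def remainSet {S A : Type*} (succs : S → A → Set S) (Sg : Set S) (s0 : S)
    (π : S → Option A) : Set S :=
  (front succs π \ Sg) ∪ ({s0} \ (Sg ∪ pdom π))

/-- A solution: a strong-cyclic (goal-closed and proper) policy covering the initial state. -/
def isSolution {S A : Type*} (succs : S → A → Set S) (Sg : Set S) (s0 : S)
    (π : S → Option A) : Prop :=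
  goalClosed succs Sg π ∧ proper succs π ∧ s0 ∈ Sg ∪ pdom π

section Aux
variable {S A : Type*}

lemma reach_none (succs : S → A → Set S) {π : S → Option A} {t : S} (h : π t = none) :
    reachFrom succs π t = {t} := by
  ext x
  simp only [Set.mem_singleton_iff, reachFrom, Set.mem_setOf_eq]
  constructor
  · intro hx
    rcases hx.cases_head with h1 | ⟨c, ⟨b, hb, _⟩, _⟩
    · exact h1.symm
    · rw [h] at hb; cases hb
  · rintro rfl; exact Relation.ReflTransGen.refl

lemma pstep_update [DecidableEq S] (succs : S → A → Set S) {π : S → Option A} {sstar : S}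
    (a : A) (h : π sstar = none) (s s' : S) :
    pstep succs (Function.update π sstar (some a)) s s' ↔
      (s = sstar ∧ s' ∈ succs sstar a) ∨ pstep succs π s s' := by
  unfold pstep
  rcases eq_or_ne s sstar with rfl | hne
  · simp [h]
  · simp [Function.update_of_ne hne, hne]

lemma pdom_update [DecidableEq S] (π : S → Option A) (sstar : S) (a : A) :
    pdom (Function.update π sstar (some a)) = insert sstar (pdom π) := by
  ext x
  rcases eq_or_ne x sstar with rfl | hne
  · simp [pdom]
  · simp [pdom, Function.update_of_ne hne, hne]

lemma reach_update [DecidableEq S] (succs : S → A → Set S) {π : S → Option A} {sstar : S}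
    (a : A) (h : π sstar = none) (s : S) :
    reachFrom succs (Function.update π sstar (some a)) s =
      reachFrom succs π s ∪
        {x | sstar ∈ reachFrom succs π s ∧ ∃ u ∈ succs sstar a, x ∈ reachFrom succs π u} := by
  ext x
  constructor
  · intro hx
    induction hx with
    | refl => exact Or.inl Relation.ReflTransGen.refl
    | @tail b c hb hbc ih =>
      rw [pstep_update succs a h] at hbc
      rcases hbc with ⟨rfl, hc⟩ | hbc
      · rcases ih with hb' | ⟨hb', _⟩
        · exact Or.inr ⟨hb', c, hc, Relation.ReflTransGen.refl⟩
        · exact Or.inr ⟨hb', c, hc, Relation.ReflTransGen.refl⟩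
      · rcases ih with hb' | ⟨h1, u, hu, hbu⟩
        · exact Or.inl (hb'.tail hbc)
        · exact Or.inr ⟨h1, u, hu, hbu.tail hbc⟩
  · have mono : ∀ p q : S, p ∈ reachFrom succs π q →
        Relation.ReflTransGen (pstep succs (Function.update π sstar (some a))) q p := by
      intro p q hpq
      exact Relation.ReflTransGen.mono
        (fun x y hxy => (pstep_update succs a h x y).mpr (Or.inr hxy)) _ _ hpq
    rintro (hx | ⟨hs, u, hu, hux⟩)
    · exact mono _ _ hx
    · exact ((mono _ _ hs).tail ((pstep_update succs a h sstar u).mpr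
        (Or.inl ⟨rfl, hu⟩))).trans (mono _ _ hux)

lemma frontEq (succs : S → A → Set S) (π πhat : S → Option A)
    (hdom : pdom πhat = pdom π)
    (hesc : ∀ s ∈ pdom π, escape succs π s = escape succs πhat s) :
    front succs π = front succs πhat := by
  ext x
  constructor
  · rintro ⟨hr, hnd⟩
    simp only [reachAll, Set.mem_iUnion] at hr
    obtain ⟨s, hs, hx⟩ := hr
    have hx' : x ∈ escape succs π s :=
      ⟨hx, ⟨Set.mem_biUnion hs hx, hnd⟩⟩
    rw [hesc s hs] at hx'
    exact hx'.2
  · rintro ⟨hr, hnd⟩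
    simp only [reachAll, Set.mem_iUnion] at hr
    obtain ⟨s, hs, hx⟩ := hr
    rw [hdom] at hs
    have hnd' : x ∉ pdom π := by rwa [← hdom]
    have hx' : x ∈ escape succs πhat s :=
      ⟨hx, ⟨Set.mem_biUnion (hdom ▸ hs) hx, hnd⟩⟩
    rw [← hesc s hs] at hx'
    exact hx'.2

/-- The "new escape" set `δ` created by adding `sstar ↦ a`. -/
def dSet (succs : S → A → Set S) (π : S → Option A) (sstar : S) (a : A) : Set S :=
  {x | (x ∈ succs sstar a ∧ π x = none) ∨
    ∃ u ∈ succs sstar a, π u ≠ none ∧ x ∈ escape succs π u}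

lemma front_update [DecidableEq S] (succs : S → A → Set S) {π : S → Option A} {sstar : S}
    (a : A) (h : π sstar = none) :
    front succs (Function.update π sstar (some a)) =
      (front succs π ∪ dSet succs π sstar a) \ {sstar} := by
  have hdom' := pdom_update π sstar a
  ext x
  constructor
  · rintro ⟨hr, hnd⟩
    rw [hdom'] at hnd
    have hxs : x ≠ sstar := fun hx => hnd (hx ▸ Set.mem_insert _ _)
    have hxd : x ∉ pdom π := fun hx => hnd (Set.mem_insert_of_mem _ hx)
    simp only [reachAll, Set.mem_iUnion] at hr
    obtain ⟨t, ht, hx⟩ := hr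
    rw [reach_update succs a h] at hx
    rw [hdom'] at ht
    refine ⟨?_, hxs⟩
    rcases hx with hx | ⟨_, u, hu, hxu⟩
    · rcases ht with rfl | ht
      · rw [reach_none succs h] at hx
        exact absurd hx hxs
      · exact Or.inl ⟨Set.mem_biUnion ht hx, hxd⟩
    · by_cases hud : u ∈ pdom π
      · have : x ∈ front succs π := ⟨Set.mem_biUnion hud hxu, hxd⟩
        exact Or.inr (Or.inr ⟨u, hu, hud, hxu, this⟩)
      · have hun : π u = none := by
          by_contra hc; exact hud hc
        rw [reach_none succs hun] at hxu
        subst hxu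
        have : π x = none := hun
        exact Or.inr (Or.inl ⟨hu, this⟩)
  · rintro ⟨hx, hxs⟩
    simp only [Set.mem_singleton_iff] at hxs
    have hstard : sstar ∈ pdom (Function.update π sstar (some a)) := by
      rw [hdom']; exact Set.mem_insert _ _
    have hreachmono : ∀ t, t ∈ pdom π → x ∈ reachFrom succs π t →
        x ∈ reachAll succs (Function.update π sstar (some a)) := by
      intro t ht hxt
      have ht' : t ∈ pdom (Function.update π sstar (some a)) := by
        rw [hdom']; exact Set.mem_insert_of_mem _ ht
      refine Set.mem_biUnion ht' ?_
      rw [reach_update succs a h]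
      exact Or.inl hxt
    rcases hx with ⟨hra, hxd⟩ | hx
    · have hnd : x ∉ pdom (Function.update π sstar (some a)) := by
        rw [hdom']; rintro (rfl | hc)
        · exact hxs rfl
        · exact hxd hc
      simp only [reachAll, Set.mem_iUnion] at hra
      obtain ⟨t, ht, hxt⟩ := hra
      exact ⟨hreachmono t ht hxt, hnd⟩
    · rcases hx with ⟨hu, hxn⟩ | ⟨u, hu, hud, hxu, hxf⟩
      · have hnd : x ∉ pdom (Function.update π sstar (some a)) := by
          rw [hdom']; rintro (rfl | hc)
          · exact hxs rfl
          · exact hc hxn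
        refine ⟨Set.mem_biUnion hstard ?_, hnd⟩
        rw [reach_update succs a h]
        exact Or.inr ⟨Relation.ReflTransGen.refl, x, hu, Relation.ReflTransGen.refl⟩
      · have hnd : x ∉ pdom (Function.update π sstar (some a)) := by
          rw [hdom']; rintro (rfl | hc)
          · exact hxs rfl
          · exact hxf.2 hc
        refine ⟨Set.mem_biUnion hstard ?_, hnd⟩
        rw [reach_update succs a h]
        exact Or.inr ⟨Relation.ReflTransGen.refl, u, hu, hxu⟩

lemma escape_update [DecidableEq S] (succs : S → A → Set S) {π : S → Option A} {sstar : S}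
    (a : A) (h : π sstar = none) (hfront : sstar ∈ front succs π)
    (s : S) (hs : s = sstar ∨ π s ≠ none) (x : S) :
    x ∈ escape succs (Function.update π sstar (some a)) s ↔
      x ≠ sstar ∧ (x ∈ escape succs π s ∨
        ((s = sstar ∨ sstar ∈ escape succs π s) ∧ x ∈ dSet succs π sstar a)) := by
  constructor
  · rintro ⟨hr, hf⟩
    rw [front_update succs a h] at hf
    obtain ⟨hfd, hxs⟩ := hf
    simp only [Set.mem_singleton_iff] at hxs
    refine ⟨hxs, ?_⟩
    rw [reach_update succs a h] at hr
    rcases hr with hr | ⟨hss, u, hu, hxu⟩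
    · -- x reached by plain π-path from s
      rcases hs with rfl | hsd
      · rw [reach_none succs h] at hr
        exact absurd hr hxs
      · -- s ∈ pdom π
        have hxnd : x ∉ pdom π := by
          rcases hfd with ⟨_, hnd⟩ | hdd
          · exact hnd
          · rcases hdd with ⟨_, hn⟩ | ⟨u, _, _, _, _, hnd⟩
            · exact fun hc => hc hn
            · exact hnd
        exact Or.inl ⟨hr, Set.mem_biUnion hsd hr, hxnd⟩
    · -- via the new action
      have hcond : s = sstar ∨ sstar ∈ escape succs π s := by
        rcases hs with rfl | hsd
        · exact Or.inl rfl
        · exact Or.inr ⟨hss, hfront⟩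
      refine Or.inr ⟨hcond, ?_⟩
      rcases hfd with ⟨_, hxnd⟩ | hdd
      · -- x ∈ front π
        by_cases hud : u ∈ pdom π
        · exact Or.inr ⟨u, hu, hud, hxu, Set.mem_biUnion hud hxu, hxnd⟩
        · have hun : π u = none := by by_contra hc; exact hud hc
          rw [reach_none succs hun] at hxu
          subst hxu
          exact Or.inl ⟨hu, hun⟩
      · exact hdd
  · rintro ⟨hxs, hx⟩
    rcases hx with hxe | ⟨hcond, hxd⟩
    · refine ⟨?_, ?_⟩
      · rw [reach_update succs a h]; exact Or.inl hxe.1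
      · rw [front_update succs a h]
        exact ⟨Or.inl hxe.2, hxs⟩
    · have hssR : sstar ∈ reachFrom succs π s := by
        rcases hcond with rfl | he
        · exact Relation.ReflTransGen.refl
        · exact he.1
      have hxU : ∃ u ∈ succs sstar a, x ∈ reachFrom succs π u := by
        rcases hxd with ⟨hu, _⟩ | ⟨u, hu, _, hxu, _⟩
        · exact ⟨x, hu, Relation.ReflTransGen.refl⟩
        · exact ⟨u, hu, hxu⟩
      refine ⟨?_, ?_⟩
      · rw [reach_update succs a h]; exact Or.inr ⟨hssR, hxU⟩
      · rw [front_update succs a h]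
        exact ⟨Or.inr hxd, hxs⟩

end Aux

/-- Lanes extension lemma: if `π̂` is a restriction of a policy `ρ` with the same domain as
`π` and pointwise-equal escape sets, then after adding the same mapping `s* ↦ a`
(with `s* ∈ front(π)` and `a` applicable to `s*`) to both, the escape sets still agree on
the whole (extended) domain. -/
theorem lanes_extension {S A : Type*} [DecidableEq S] (succs : S → A → Set S)
    (app : S → A → Prop)
    (π πhat ρ : S → Option A) (hsub : subpolicy πhat ρ)
    (hdom : pdom πhat = pdom π)
    (hesc : ∀ s ∈ pdom π, escape succs π s = escape succs πhat s)
    (sstar : S) (hstar : sstar ∈ front succs π) (a : A) (ha : app sstar a) :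
    ∀ s ∈ pdom (Function.update π sstar (some a)),
      escape succs (Function.update π sstar (some a)) s =
        escape succs (Function.update πhat sstar (some a)) s := by
  intro s hs
  have hnoneπ : π sstar = none := by
    by_contra hc; exact hstar.2 hc
  have hstar_nd : sstar ∉ pdom πhat := by rw [hdom]; exact hstar.2
  have hnoneπh : πhat sstar = none := by by_contra hc; exact hstar_nd hc
  have hfr := frontEq succs π πhat hdom hesc
  have hstarh : sstar ∈ front succs πhat := hfr ▸ hstar
  rw [pdom_update] at hs
  have hs' : s = sstar ∨ π s ≠ none := by
    rcases hs with rfl | hsd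
    · exact Or.inl rfl
    · exact Or.inr hsd
  have hmem : ∀ u, π u ≠ none ↔ πhat u ≠ none := by
    intro u
    constructor
    · intro h; have h2 : u ∈ pdom π := h; rw [← hdom] at h2; exact h2
    · intro h; have h2 : u ∈ pdom πhat := h; rw [hdom] at h2; exact h2
  have hnn : ∀ u, π u = none ↔ πhat u = none := by
    intro u
    constructor
    · intro h; by_contra hc; exact ((hmem u).mpr hc) h
    · intro h; by_contra hc; exact ((hmem u).mp hc) h
  have hsh : s = sstar ∨ πhat s ≠ none := by
    rcases hs' with rfl | hd
    · exact Or.inl rfl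
    · exact Or.inr ((hmem s).mp hd)
  have hdset : dSet succs π sstar a = dSet succs πhat sstar a := by
    ext x
    constructor
    · rintro (⟨hu, hn⟩ | ⟨u, hu, hd, hx⟩)
      · exact Or.inl ⟨hu, (hnn x).mp hn⟩
      · exact Or.inr ⟨u, hu, (hmem u).mp hd, (hesc u hd) ▸ hx⟩
    · rintro (⟨hu, hn⟩ | ⟨u, hu, hd, hx⟩)
      · exact Or.inl ⟨hu, (hnn x).mpr hn⟩
      · have hd' : π u ≠ none := (hmem u).mpr hd
        exact Or.inr ⟨u, hu, hd', (hesc u hd').symm ▸ hx⟩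
  ext x
  rw [escape_update succs a hnoneπ hstar s hs' x,
      escape_update succs a hnoneπh hstarh s hsh x, hdset]
  rcases hs' with rfl | hsd
  · constructor
    · rintro ⟨hxs, hx⟩
      refine ⟨hxs, Or.inr ?_⟩
      rcases hx with he | ⟨_, hd⟩
      · have := he.1
        rw [reach_none succs hnoneπ] at this
        exact absurd this hxs
      · exact ⟨Or.inl rfl, hd⟩
    · rintro ⟨hxs, hx⟩
      refine ⟨hxs, Or.inr ?_⟩
      rcases hx with he | ⟨_, hd⟩
      · have := he.1
        rw [reach_none succs hnoneπh] at this
        exact absurd this hxs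
      · exact ⟨Or.inl rfl, hd⟩
  · rw [hesc s hsd]
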